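/- The function q₀(x,y) = -8(σ - 1/3) x / (x² + y² + 3σ - 1), for σ > 1/3, satisfies (σ - 1/3) ∂_x⁴ q₀ - ∂_x² q₀ - ∂_y² q₀ - (3/2) ∂_x((∂_x q₀)²) = 0 on ℝ². -/

import Mathlib

private lemma hden (a t : ℝ) : HasDerivAt (fun t : ℝ => t ^ 2 + a) (2 * t) t := by
  simpa using (hasDerivAt_pow 2 t).add_const a

private lemma L1 (c a : ℝ) (ha : 0 < a) (t : ℝ) :
    HasDerivAt (fun t : ℝ => -8 * c * t / (t ^ 2 + a))
      (-8 * c * (a - t ^ 2) / (t ^ 2 + a) ^ 2) t := by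
  have hA : t ^ 2 + a ≠ 0 := by positivity
  have hn : HasDerivAt (fun t : ℝ => -8 * c * t) (-8 * c) t := by
    simpa using (hasDerivAt_id t).const_mul (-8 * c)
  have h := hn.div (hden a t) hA
  refine h.congr_deriv ?_
  field_simp
  ring

private lemma L2 (c a : ℝ) (ha : 0 < a) (t : ℝ) :
    HasDerivAt (fun t : ℝ => -8 * c * (a - t ^ 2) / (t ^ 2 + a) ^ 2)
      (-8 * c * (2 * t ^ 3 - 6 * t * a) / (t ^ 2 + a) ^ 3) t := by
  have hA : t ^ 2 + a ≠ 0 := by positivity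
  have hn : HasDerivAt (fun t : ℝ => -8 * c * (a - t ^ 2)) (16 * c * t) t := by
    have := ((hasDerivAt_pow 2 t).const_sub a).const_mul (-8 * c)
    refine this.congr_deriv ?_
    push_cast; ring
  have hd : HasDerivAt (fun t : ℝ => (t ^ 2 + a) ^ 2)
      ((2 : ℕ) * (t ^ 2 + a) ^ 1 * (2 * t)) t := (hden a t).pow 2
  have h := hn.div hd (pow_ne_zero 2 hA)
  refine h.congr_deriv ?_
  field_simp
  ring

private lemma L3 (c a : ℝ) (ha : 0 < a) (t : ℝ) :
    HasDerivAt (fun t : ℝ => -8 * c * (2 * t ^ 3 - 6 * t * a) / (t ^ 2 + a) ^ 3)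
      (-8 * c * (-6 * t ^ 4 + 36 * t ^ 2 * a - 6 * a ^ 2) / (t ^ 2 + a) ^ 4) t := by
  have hA : t ^ 2 + a ≠ 0 := by positivity
  have hn : HasDerivAt (fun t : ℝ => -8 * c * (2 * t ^ 3 - 6 * t * a))
      (-8 * c * (6 * t ^ 2 - 6 * a)) t := by
    have h1 : HasDerivAt (fun t : ℝ => 2 * t ^ 3 - 6 * t * a) (6 * t ^ 2 - 6 * a) t := by
      have := ((hasDerivAt_pow 3 t).const_mul 2).sub
        (((hasDerivAt_id t).const_mul 6).mul_const a)
      refine this.congr_deriv ?_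
      push_cast; ring
    simpa using h1.const_mul (-8 * c)
  have hd : HasDerivAt (fun t : ℝ => (t ^ 2 + a) ^ 3)
      ((3 : ℕ) * (t ^ 2 + a) ^ 2 * (2 * t)) t := (hden a t).pow 3
  have h := hn.div hd (pow_ne_zero 3 hA)
  refine h.congr_deriv ?_
  field_simp
  ring

private lemma L4 (c a : ℝ) (ha : 0 < a) (t : ℝ) :
    HasDerivAt (fun t : ℝ => -8 * c * (-6 * t ^ 4 + 36 * t ^ 2 * a - 6 * a ^ 2) / (t ^ 2 + a) ^ 4)
      (-8 * c * (24 * t ^ 5 - 240 * t ^ 3 * a + 120 * t * a ^ 2) / (t ^ 2 + a) ^ 5) t := by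
  have hA : t ^ 2 + a ≠ 0 := by positivity
  have hn : HasDerivAt (fun t : ℝ => -8 * c * (-6 * t ^ 4 + 36 * t ^ 2 * a - 6 * a ^ 2))
      (-8 * c * (-24 * t ^ 3 + 72 * t * a)) t := by
    have h1 : HasDerivAt (fun t : ℝ => -6 * t ^ 4 + 36 * t ^ 2 * a - 6 * a ^ 2)
        (-24 * t ^ 3 + 72 * t * a) t := by
      have := (((hasDerivAt_pow 4 t).const_mul (-6)).add
        (((hasDerivAt_pow 2 t).const_mul 36).mul_const a)).sub_const (6 * a ^ 2)
      refine this.congr_deriv ?_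
      push_cast; ring
    simpa using h1.const_mul (-8 * c)
  have hd : HasDerivAt (fun t : ℝ => (t ^ 2 + a) ^ 4)
      ((4 : ℕ) * (t ^ 2 + a) ^ 3 * (2 * t)) t := (hden a t).pow 4
  have h := hn.div hd (pow_ne_zero 4 hA)
  refine h.congr_deriv ?_
  field_simp
  ring

private lemma G1 (c b x : ℝ) (hb : 0 < b) (s : ℝ) :
    HasDerivAt (fun s : ℝ => -8 * c * x / (s ^ 2 + b))
      (16 * c * x * s / (s ^ 2 + b) ^ 2) s := by
  have hA : s ^ 2 + b ≠ 0 := by positivity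
  have h := (hasDerivAt_const s (-8 * c * x)).div (hden b s) hA
  refine h.congr_deriv ?_
  field_simp
  ring

private lemma G2 (c b x : ℝ) (hb : 0 < b) (s : ℝ) :
    HasDerivAt (fun s : ℝ => 16 * c * x * s / (s ^ 2 + b) ^ 2)
      (16 * c * x * (b - 3 * s ^ 2) / (s ^ 2 + b) ^ 3) s := by
  have hA : s ^ 2 + b ≠ 0 := by positivity
  have hn : HasDerivAt (fun s : ℝ => 16 * c * x * s) (16 * c * x) s := by
    simpa using (hasDerivAt_id s).const_mul (16 * c * x)
  have hd : HasDerivAt (fun s : ℝ => (s ^ 2 + b) ^ 2)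
      ((2 : ℕ) * (s ^ 2 + b) ^ 1 * (2 * s)) s := (hden b s).pow 2
  have h := hn.div hd (pow_ne_zero 2 hA)
  refine h.congr_deriv ?_
  field_simp
  ring

set_option maxHeartbeats 4000000 in
theorem stmt_5 (σ : ℝ) (hσ : 1 / 3 < σ)
    (q₀ : ℝ → ℝ → ℝ)
    (hq₀ : ∀ x y : ℝ,
      q₀ x y = -8 * (σ - 1 / 3) * x / (x ^ 2 + y ^ 2 + 3 * σ - 1)) :
    ∀ x y : ℝ,
      (σ - 1 / 3) * iteratedDeriv 4 (fun t => q₀ t y) x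
        - iteratedDeriv 2 (fun t => q₀ t y) x
        - iteratedDeriv 2 (fun s => q₀ x s) y
        - (3 / 2) * deriv (fun t => (deriv (fun t' => q₀ t' y) t) ^ 2) x = 0 := by
  intro x y
  set c : ℝ := σ - 1 / 3 with hc
  have ha : (0:ℝ) < y ^ 2 + (3 * σ - 1) := by nlinarith [sq_nonneg y]
  have hb : (0:ℝ) < x ^ 2 + (3 * σ - 1) := by nlinarith [sq_nonneg x]
  have hfx : (fun t => q₀ t y) = fun t : ℝ => -8 * c * t / (t ^ 2 + (y ^ 2 + (3 * σ - 1))) := by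
    funext t
    rw [hq₀]
    ring_nf
  have hfy : (fun s => q₀ x s) = fun s : ℝ => -8 * c * x / (s ^ 2 + (x ^ 2 + (3 * σ - 1))) := by
    funext s
    rw [hq₀]
    ring_nf
  set a : ℝ := y ^ 2 + (3 * σ - 1) with hadef
  set b : ℝ := x ^ 2 + (3 * σ - 1) with hbdef
  have d1 : deriv (fun t : ℝ => -8 * c * t / (t ^ 2 + a)) =
      fun t : ℝ => -8 * c * (a - t ^ 2) / (t ^ 2 + a) ^ 2 :=
    funext fun t => (L1 c a ha t).deriv
  have d2 : deriv (fun t : ℝ => -8 * c * (a - t ^ 2) / (t ^ 2 + a) ^ 2) =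
      fun t : ℝ => -8 * c * (2 * t ^ 3 - 6 * t * a) / (t ^ 2 + a) ^ 3 :=
    funext fun t => (L2 c a ha t).deriv
  have d3 : deriv (fun t : ℝ => -8 * c * (2 * t ^ 3 - 6 * t * a) / (t ^ 2 + a) ^ 3) =
      fun t : ℝ => -8 * c * (-6 * t ^ 4 + 36 * t ^ 2 * a - 6 * a ^ 2) / (t ^ 2 + a) ^ 4 :=
    funext fun t => (L3 c a ha t).deriv
  have e1 : deriv (fun s : ℝ => -8 * c * x / (s ^ 2 + b)) =
      fun s : ℝ => 16 * c * x * s / (s ^ 2 + b) ^ 2 :=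
    funext fun s => (G1 c b x hb s).deriv
  have H4 : iteratedDeriv 4 (fun t => q₀ t y) x =
      -8 * c * (24 * x ^ 5 - 240 * x ^ 3 * a + 120 * x * a ^ 2) / (x ^ 2 + a) ^ 5 := by
    rw [hfx]
    simp only [iteratedDeriv_succ, iteratedDeriv_zero]
    rw [d1, d2, d3]
    exact (L4 c a ha x).deriv
  have H2x : iteratedDeriv 2 (fun t => q₀ t y) x =
      -8 * c * (2 * x ^ 3 - 6 * x * a) / (x ^ 2 + a) ^ 3 := by
    rw [hfx]
    simp only [iteratedDeriv_succ, iteratedDeriv_zero]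
    rw [d1]
    exact (L2 c a ha x).deriv
  have H2y : iteratedDeriv 2 (fun s => q₀ x s) y =
      16 * c * x * (b - 3 * y ^ 2) / (y ^ 2 + b) ^ 3 := by
    rw [hfy]
    simp only [iteratedDeriv_succ, iteratedDeriv_zero]
    rw [e1]
    exact (G2 c b x hb y).deriv
  have Hn : deriv (fun t => (deriv (fun t' => q₀ t' y) t) ^ 2) x =
      2 * (-8 * c * (a - x ^ 2) / (x ^ 2 + a) ^ 2) *
        (-8 * c * (2 * x ^ 3 - 6 * x * a) / (x ^ 2 + a) ^ 3) := by
    rw [hfx, d1]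
    have h := ((L2 c a ha x).pow 2).deriv
    refine h.trans ?_
    push_cast
    ring
  rw [H4, H2x, H2y, Hn]
  have hDy : y ^ 2 + b = x ^ 2 + a := by rw [hadef, hbdef]; ring
  rw [hDy]
  have hD : x ^ 2 + a ≠ 0 := by positivity
  have hca : a = y ^ 2 + 3 * c := by rw [hadef, hc]; ring
  have hcb : b = x ^ 2 + 3 * c := by rw [hbdef, hc]; ring
  rw [hca, hcb]
  have hD2 : x ^ 2 + (y ^ 2 + 3 * c) ≠ 0 := by rw [← hca]; exact hD
  field_simp [hD2]
  ring
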